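/- arXiv:2604.18863 — 6 statements merged into one kernel-verified Lean document; each statement's English description precedes it below -/
import Mathlib

section
/- For clusters l = 1,…,N, let D_l be a real n_l × p matrix and V_l a real symmetric invertible n_l × n_l matrix; set A_l = D_lᵀ V_l⁻¹ D_l, I₀ = Σ_{l=1}^N A_l (assumed invertible), Δ = I₀⁻¹, H_{il} = D_i Δ D_lᵀ V_l⁻¹, and H_{ii} = D_i Δ D_iᵀ V_i⁻¹. Fix an index i and assume I₀ − A_i and I_{n_i} − H_{ii} are invertible. Then D_iᵀ V_i⁻¹ (I − H_{ii})⁻¹ [Σ_{l ≠ i} H_{il} V_l H_{il}ᵀ] ((I − H_{ii})⁻¹)ᵀ V_i⁻¹ D_i = A_i (I₀ − A_i)⁻¹ A_i. -/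
open scoped Matrix
open Finset

/-- algebraic core of the direction-dependent overcorrection:
`D_iᵀ V_i⁻¹ (1 − H_{ii})⁻¹ [Σ_{l ≠ i} H_{il} V_l H_{il}ᵀ] ((1 − H_{ii})⁻¹)ᵀ V_i⁻¹ D_i
  = A_i (I₀ − A_i)⁻¹ A_i`. -/
theorem overcorrection_algebraic_core
    {N p : ℕ} (n : Fin N → ℕ)
    (D : ∀ l, Matrix (Fin (n l)) (Fin p) ℝ)
    (V : ∀ l, Matrix (Fin (n l)) (Fin (n l)) ℝ)
    (hVsymm : ∀ l, (V l).IsSymm) (hVunit : ∀ l, IsUnit (V l))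
    (A : Fin N → Matrix (Fin p) (Fin p) ℝ)
    (hA : ∀ l, A l = (D l)ᵀ * (V l)⁻¹ * D l)
    (I₀ : Matrix (Fin p) (Fin p) ℝ) (hI₀ : I₀ = ∑ l, A l)
    (hI₀unit : IsUnit I₀)
    (Δ : Matrix (Fin p) (Fin p) ℝ) (hΔ : Δ = I₀⁻¹)
    (H : ∀ i l, Matrix (Fin (n i)) (Fin (n l)) ℝ)
    (hH : ∀ i l, H i l = D i * Δ * (D l)ᵀ * (V l)⁻¹)
    (i : Fin N)
    (hIA : IsUnit (I₀ - A i))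
    (hIH : IsUnit ((1 : Matrix (Fin (n i)) (Fin (n i)) ℝ) - H i i)) :
    (D i)ᵀ * (V i)⁻¹ * (1 - H i i)⁻¹ *
        (∑ l ∈ univ.erase i, H i l * V l * (H i l)ᵀ) *
        ((1 - H i i)⁻¹)ᵀ * (V i)⁻¹ * D i
      = A i * (I₀ - A i)⁻¹ * A i := by
  have hVd : ∀ l, IsUnit (V l).det := fun l =>
    (Matrix.isUnit_iff_isUnit_det _).mp (hVunit l)
  have hI₀d : IsUnit I₀.det := (Matrix.isUnit_iff_isUnit_det _).mp hI₀unit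
  have hIAd : IsUnit (I₀ - A i).det := (Matrix.isUnit_iff_isUnit_det _).mp hIA
  have hIHd : IsUnit ((1 : Matrix (Fin (n i)) (Fin (n i)) ℝ) - H i i).det :=
    (Matrix.isUnit_iff_isUnit_det _).mp hIH
  have hVinvT : ∀ l, ((V l)⁻¹)ᵀ = (V l)⁻¹ := fun l => by
    rw [Matrix.transpose_nonsing_inv, (hVsymm l).eq]
  have hAsymm : ∀ l, (A l)ᵀ = A l := fun l => by
    rw [hA, Matrix.transpose_mul, Matrix.transpose_mul, hVinvT,
      Matrix.transpose_transpose, Matrix.mul_assoc]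
  have hI₀symm : I₀ᵀ = I₀ := by
    rw [hI₀, Matrix.transpose_sum]
    exact Finset.sum_congr rfl fun l _ => hAsymm l
  have hΔsymm : Δᵀ = Δ := by
    rw [hΔ, Matrix.transpose_nonsing_inv, hI₀symm]
  have hIAsymm : ((I₀ - A i)⁻¹)ᵀ = (I₀ - A i)⁻¹ := by
    rw [Matrix.transpose_nonsing_inv, Matrix.transpose_sub, hI₀symm, hAsymm]
  have hΔI₀ : Δ * I₀ = 1 := by rw [hΔ]; exact Matrix.nonsing_inv_mul _ hI₀d
  -- the cross-subject sum collapses to `D i * Δ * (I₀ - A i) * Δ * (D i)ᵀ`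
  have hterm : ∀ l, H i l * V l * (H i l)ᵀ = D i * Δ * A l * Δ * (D i)ᵀ := by
    intro l
    rw [hH, Matrix.transpose_mul, Matrix.transpose_mul, Matrix.transpose_mul,
      hVinvT, Matrix.transpose_transpose, hΔsymm,
      Matrix.nonsing_inv_mul_cancel_right _ _ (hVd l), hA]
    simp only [Matrix.mul_assoc]
  have h1 : (∑ l ∈ univ.erase i, A l) = I₀ - A i := by
    rw [hI₀, ← Finset.add_sum_erase _ A (Finset.mem_univ i), add_sub_cancel_left]
  have hsum : (∑ l ∈ univ.erase i, H i l * V l * (H i l)ᵀ)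
      = D i * Δ * (I₀ - A i) * Δ * (D i)ᵀ := by
    calc (∑ l ∈ univ.erase i, H i l * V l * (H i l)ᵀ)
        = ∑ l ∈ univ.erase i, D i * Δ * A l * Δ * (D i)ᵀ :=
          Finset.sum_congr rfl fun l _ => hterm l
      _ = D i * Δ * (∑ l ∈ univ.erase i, A l) * Δ * (D i)ᵀ := by
          rw [Matrix.mul_sum, Matrix.sum_mul, Matrix.sum_mul]
      _ = D i * Δ * (I₀ - A i) * Δ * (D i)ᵀ := by rw [h1]
  -- key leverage identity
  have h2 : ((1 : Matrix (Fin (n i)) (Fin (n i)) ℝ) - H i i) * D i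
      = D i * (Δ * (I₀ - A i)) := by
    rw [Matrix.sub_mul, Matrix.one_mul, Matrix.mul_sub, hΔI₀, Matrix.mul_sub,
      Matrix.mul_one, hH, hA]
    congr 1
    simp only [Matrix.mul_assoc]
  have hstep : ((1 : Matrix (Fin (n i)) (Fin (n i)) ℝ) - H i i) *
      (D i * (I₀ - A i)⁻¹) = D i * Δ := by
    rw [← Matrix.mul_assoc, h2]
    simp only [Matrix.mul_assoc]
    rw [Matrix.mul_nonsing_inv _ hIAd, Matrix.mul_one]
  have E : ((1 : Matrix (Fin (n i)) (Fin (n i)) ℝ) - H i i)⁻¹ * (D i * Δ)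
      = D i * (I₀ - A i)⁻¹ := by
    rw [← hstep, Matrix.nonsing_inv_mul_cancel_left _ _ hIHd]
  have ET : Δ * ((D i)ᵀ *
        (((1 : Matrix (Fin (n i)) (Fin (n i)) ℝ) - H i i)⁻¹)ᵀ)
      = (I₀ - A i)⁻¹ * (D i)ᵀ := by
    have := congrArg Matrix.transpose E
    rw [Matrix.transpose_mul, Matrix.transpose_mul, Matrix.transpose_mul,
      hΔsymm, hIAsymm, Matrix.mul_assoc] at this
    exact this
  have L1 : ∀ (X : Matrix (Fin p) (Fin p) ℝ),
      ((1 : Matrix (Fin (n i)) (Fin (n i)) ℝ) - H i i)⁻¹ * (D i * (Δ * X))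
        = D i * ((I₀ - A i)⁻¹ * X) := by
    intro X
    calc ((1 : Matrix (Fin (n i)) (Fin (n i)) ℝ) - H i i)⁻¹ * (D i * (Δ * X))
        = ((1 : Matrix (Fin (n i)) (Fin (n i)) ℝ) - H i i)⁻¹ * (D i * Δ) * X := by
          simp only [Matrix.mul_assoc]
      _ = D i * ((I₀ - A i)⁻¹ * X) := by rw [E]; simp only [Matrix.mul_assoc]
  have L2 : ∀ (Y : Matrix (Fin (n i)) (Fin p) ℝ),
      Δ * ((D i)ᵀ *
          ((((1 : Matrix (Fin (n i)) (Fin (n i)) ℝ) - H i i)⁻¹)ᵀ * Y))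
        = (I₀ - A i)⁻¹ * ((D i)ᵀ * Y) := by
    intro Y
    calc Δ * ((D i)ᵀ *
          ((((1 : Matrix (Fin (n i)) (Fin (n i)) ℝ) - H i i)⁻¹)ᵀ * Y))
        = Δ * ((D i)ᵀ *
            (((1 : Matrix (Fin (n i)) (Fin (n i)) ℝ) - H i i)⁻¹)ᵀ) * Y := by
          simp only [Matrix.mul_assoc]
      _ = (I₀ - A i)⁻¹ * ((D i)ᵀ * Y) := by rw [ET]; simp only [Matrix.mul_assoc]
  rw [hsum]
  simp only [Matrix.mul_assoc]
  rw [L1, L2, Matrix.nonsing_inv_mul_cancel_left _ _ hIAd, hA]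
  simp only [Matrix.mul_assoc]
end

section
/- For clusters i = 1,…,N, let D_i be a real n_i × p matrix and V_i a real symmetric invertible n_i × n_i matrix; set A_i = D_iᵀ V_i⁻¹ D_i, I₀ = Σ_i A_i (assumed invertible), Δ = I₀⁻¹, H_{il} = D_i Δ D_lᵀ V_l⁻¹, H_{ii} = D_i Δ D_iᵀ V_i⁻¹, and assume I₀ − A_i and I_{n_i} − H_{ii} are invertible for every i. Let (Ω, F, μ) be a probability space and let e_1,…,e_N be independent random vectors, e_i taking values in ℝ^{n_i}, with E[e_i] = 0, square-integrable components, and E[e_i e_iᵀ] = V_i. Define r_i = (I − H_{ii}) e_i − Σ_{l ≠ i} H_{il} e_l and the corrected score f_i = D_iᵀ V_i⁻¹ (I − H_{ii})⁻¹ r_i. Then E[f_i f_iᵀ] = A_i + A_i (I₀ − A_i)⁻¹ A_i for every i, and consequently Σ_{i=1}^N E[f_i f_iᵀ] = I₀ + Σ_{i=1}^N A_i (I₀ − A_i)⁻¹ A_i. -/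
open scoped Matrix
open Finset MeasureTheory ProbabilityTheory

private lemma l2_mul_integrable {Ω : Type*} [MeasurableSpace Ω] {μ : Measure Ω}
    [IsProbabilityMeasure μ] {X Y : Ω → ℝ} (hX : MemLp X 2 μ) (hY : MemLp Y 2 μ) :
    Integrable (fun ω => X ω * Y ω) μ := by
  have h1 := hX.integrable_sq
  have h2 := hY.integrable_sq
  refine ((h1.add h2).const_mul (1/2 : ℝ)).mono'
    (hX.aestronglyMeasurable.mul hY.aestronglyMeasurable) ?_
  filter_upwards with ω
  have h := sq_nonneg (|X ω| - |Y ω|)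
  have : ‖X ω * Y ω‖ = |X ω| * |Y ω| := by rw [Real.norm_eq_abs, abs_mul]
  rw [this]
  simp only [Pi.add_apply, Pi.pow_apply]
  nlinarith [sq_abs (X ω), sq_abs (Y ω), abs_nonneg (X ω), abs_nonneg (Y ω)]

private lemma mulVec_mul_expand {Ω : Type*} {a b q : ℕ}
    (P : Matrix (Fin q) (Fin a) ℝ) (Q : Matrix (Fin q) (Fin b) ℝ)
    (X : Ω → Fin a → ℝ) (Y : Ω → Fin b → ℝ) (s t : Fin q) (ω : Ω) :
    (P *ᵥ X ω) s * (Q *ᵥ Y ω) t = ∑ j, ∑ k, P s j * Q t k * (X ω j * Y ω k) := by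
  simp only [Matrix.mulVec, dotProduct, Finset.sum_mul_sum]
  refine Finset.sum_congr rfl fun j _ => Finset.sum_congr rfl fun k _ => by ring

private lemma integrable_mulVec_mul {Ω : Type*} [MeasurableSpace Ω] {μ : Measure Ω}
    {a b q : ℕ} (P : Matrix (Fin q) (Fin a) ℝ) (Q : Matrix (Fin q) (Fin b) ℝ)
    (X : Ω → Fin a → ℝ) (Y : Ω → Fin b → ℝ)
    (hint : ∀ j k, Integrable (fun ω => X ω j * Y ω k) μ) (s t : Fin q) :
    Integrable (fun ω => (P *ᵥ X ω) s * (Q *ᵥ Y ω) t) μ := by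
  simp only [mulVec_mul_expand]
  exact integrable_finset_sum _ fun j _ => integrable_finset_sum _ fun k _ =>
    (hint j k).const_mul _

private lemma integral_mulVec_mul {Ω : Type*} [MeasurableSpace Ω] {μ : Measure Ω}
    {a b q : ℕ} (P : Matrix (Fin q) (Fin a) ℝ) (Q : Matrix (Fin q) (Fin b) ℝ)
    (X : Ω → Fin a → ℝ) (Y : Ω → Fin b → ℝ)
    (hint : ∀ j k, Integrable (fun ω => X ω j * Y ω k) μ) (s t : Fin q) :
    ∫ ω, (P *ᵥ X ω) s * (Q *ᵥ Y ω) t ∂μ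
      = ∑ j, ∑ k, P s j * Q t k * ∫ ω, X ω j * Y ω k ∂μ := by
  simp only [mulVec_mul_expand]
  rw [integral_finset_sum _ fun j _ => integrable_finset_sum _ fun k _ =>
    (hint j k).const_mul _]
  refine Finset.sum_congr rfl fun j _ => ?_
  rw [integral_finset_sum _ fun k _ => (hint j k).const_mul _]
  exact Finset.sum_congr rfl fun k _ => MeasureTheory.integral_const_mul _ _

private lemma sum_sum_mul_entry {a q : ℕ} (P Q : Matrix (Fin q) (Fin a) ℝ)
    (W : Matrix (Fin a) (Fin a) ℝ) (s t : Fin q) :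
    ∑ j, ∑ k, P s j * Q t k * W j k = (P * W * Qᵀ) s t := by
  simp only [Matrix.mul_apply, Matrix.transpose_apply, Finset.sum_mul]
  rw [Finset.sum_comm]
  refine Finset.sum_congr rfl fun j _ => Finset.sum_congr rfl fun k _ => by ring

private lemma mulVec_sumv {m k : ℕ} {ι : Type*} (s : Finset ι)
    (M : Matrix (Fin m) (Fin k) ℝ) (v : ι → Fin k → ℝ) :
    M *ᵥ (∑ l ∈ s, v l) = ∑ l ∈ s, M *ᵥ v l := by
  ext j
  simp only [Matrix.mulVec, dotProduct, Finset.sum_apply, Finset.mul_sum]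
  rw [Finset.sum_comm]

/-- Theorem 2, direction-dependent overcorrection: under correctly
specified working covariance `E[e_i e_iᵀ] = V_i` and the first-order residual
expansion, the corrected scores `f_i = D_iᵀ V_i⁻¹ (1 − H_{ii})⁻¹ r_i` satisfy
`E[f_i f_iᵀ] = A_i + A_i (I₀ − A_i)⁻¹ A_i` for every `i`, and summing over clusters
`Σ_i E[f_i f_iᵀ] = I₀ + Σ_i A_i (I₀ − A_i)⁻¹ A_i`. -/
theorem overcorrection_expected_middle_matrix
    {N p : ℕ} (n : Fin N → ℕ)
    (D : ∀ l, Matrix (Fin (n l)) (Fin p) ℝ)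
    (V : ∀ l, Matrix (Fin (n l)) (Fin (n l)) ℝ)
    (hVsymm : ∀ l, (V l).IsSymm) (hVunit : ∀ l, IsUnit (V l))
    (A : Fin N → Matrix (Fin p) (Fin p) ℝ)
    (hA : ∀ l, A l = (D l)ᵀ * (V l)⁻¹ * D l)
    (I₀ : Matrix (Fin p) (Fin p) ℝ) (hI₀ : I₀ = ∑ l, A l)
    (hI₀unit : IsUnit I₀)
    (Δ : Matrix (Fin p) (Fin p) ℝ) (hΔ : Δ = I₀⁻¹)
    (H : ∀ i l, Matrix (Fin (n i)) (Fin (n l)) ℝ)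
    (hH : ∀ i l, H i l = D i * Δ * (D l)ᵀ * (V l)⁻¹)
    (hIA : ∀ i, IsUnit (I₀ - A i))
    (hIH : ∀ i, IsUnit ((1 : Matrix (Fin (n i)) (Fin (n i)) ℝ) - H i i))
    {Ω : Type*} [MeasurableSpace Ω] (μ : Measure Ω) [IsProbabilityMeasure μ]
    (e : ∀ i, Ω → Fin (n i) → ℝ)
    (hmeas : ∀ i, Measurable (e i))
    (hindep : iIndepFun e μ)
    (hL2 : ∀ i j, MemLp (fun ω => e i ω j) 2 μ)
    (hmean : ∀ i j, ∫ ω, e i ω j ∂μ = 0)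
    (hcov : ∀ i, ∀ j k, ∫ ω, e i ω j * e i ω k ∂μ = V i j k)
    (r : ∀ i, Ω → Fin (n i) → ℝ)
    (hr : ∀ i ω, r i ω =
      (1 - H i i) *ᵥ e i ω - ∑ l ∈ univ.erase i, H i l *ᵥ e l ω)
    (f : ∀ i, Ω → Fin p → ℝ)
    (hf : ∀ i ω, f i ω = ((D i)ᵀ * (V i)⁻¹ * (1 - H i i)⁻¹) *ᵥ r i ω) :
    (∀ i, (Matrix.of fun s t => ∫ ω, f i ω s * f i ω t ∂μ)
        = A i + A i * (I₀ - A i)⁻¹ * A i) ∧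
      ∑ i, (Matrix.of fun s t => ∫ ω, f i ω s * f i ω t ∂μ)
        = I₀ + ∑ i, A i * (I₀ - A i)⁻¹ * A i := by
  -- Matrix preliminaries
  have hVdet : ∀ l, IsUnit (V l).det := fun l => (Matrix.isUnit_iff_isUnit_det _).1 (hVunit l)
  have hWV : ∀ l, (V l)⁻¹ * V l = 1 := fun l => Matrix.nonsing_inv_mul _ (hVdet l)
  have hWsymm : ∀ l, ((V l)⁻¹)ᵀ = (V l)⁻¹ := fun l => by
    rw [Matrix.transpose_nonsing_inv, (hVsymm l).eq]
  have hAsymm : ∀ l, (A l)ᵀ = A l := fun l => by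
    rw [hA]
    simp [Matrix.transpose_mul, Matrix.transpose_transpose, hWsymm l, Matrix.mul_assoc]
  have hI₀symm : I₀ᵀ = I₀ := by
    rw [hI₀, Matrix.transpose_sum]
    exact Finset.sum_congr rfl fun l _ => hAsymm l
  have hΔsymm : Δᵀ = Δ := by rw [hΔ, Matrix.transpose_nonsing_inv, hI₀symm]
  have hI₀det : IsUnit I₀.det := (Matrix.isUnit_iff_isUnit_det _).1 hI₀unit
  have hΔI : Δ * I₀ = 1 := by rw [hΔ]; exact Matrix.nonsing_inv_mul _ hI₀det
  have hIΔ : I₀ * Δ = 1 := by rw [hΔ]; exact Matrix.mul_nonsing_inv _ hI₀det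
  have hIAdet : ∀ i, IsUnit (I₀ - A i).det := fun i =>
    (Matrix.isUnit_iff_isUnit_det _).1 (hIA i)
  have hIAsymm : ∀ i, ((I₀ - A i)⁻¹)ᵀ = (I₀ - A i)⁻¹ := fun i => by
    rw [Matrix.transpose_nonsing_inv, Matrix.transpose_sub, hI₀symm, hAsymm]
  have hIHdet : ∀ i, IsUnit ((1 : Matrix (Fin (n i)) (Fin (n i)) ℝ) - H i i).det := fun i =>
    (Matrix.isUnit_iff_isUnit_det _).1 (hIH i)
  -- Integrability and cross-moment facts
  have hInt : ∀ l m (j : Fin (n l)) (k : Fin (n m)),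
      Integrable (fun ω => e l ω j * e m ω k) μ := by
    intro l m j k
    by_cases h : l = m
    · subst h; exact l2_mul_integrable (hL2 l j) (hL2 l k)
    · have hind : IndepFun (fun ω => e l ω j) (fun ω => e m ω k) μ :=
        (hindep.indepFun h).comp (measurable_pi_apply j) (measurable_pi_apply k)
      exact hind.integrable_mul ((hL2 l j).integrable one_le_two)
        ((hL2 m k).integrable one_le_two)
  have hZero : ∀ l m, l ≠ m → ∀ (j : Fin (n l)) (k : Fin (n m)),
      ∫ ω, e l ω j * e m ω k ∂μ = 0 := by
    intro l m h j k
    have hind : IndepFun (fun ω => e l ω j) (fun ω => e m ω k) μ :=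
      (hindep.indepFun h).comp (measurable_pi_apply j) (measurable_pi_apply k)
    have hmul := hind.integral_mul_eq_mul_integral ((hL2 l j).aestronglyMeasurable)
      ((hL2 m k).aestronglyMeasurable)
    calc ∫ ω, e l ω j * e m ω k ∂μ
        = ∫ ω, ((fun ω => e l ω j) * fun ω => e m ω k) ω ∂μ := rfl
      _ = (∫ ω, e l ω j ∂μ) * ∫ ω, e m ω k ∂μ := hmul
      _ = 0 := by rw [hmean, hmean, mul_zero]
  -- the main per-cluster identity
  have main : ∀ i, (Matrix.of fun s t => ∫ ω, f i ω s * f i ω t ∂μ)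
      = A i + A i * (I₀ - A i)⁻¹ * A i := by
    intro i
    set P : Matrix (Fin p) (Fin (n i)) ℝ := (D i)ᵀ * (V i)⁻¹ with hP
    set M : Matrix (Fin p) (Fin (n i)) ℝ := (D i)ᵀ * (V i)⁻¹ * (1 - H i i)⁻¹ with hM
    set Q : ∀ l, Matrix (Fin p) (Fin (n l)) ℝ := fun l => M * H i l with hQ
    have hf' : ∀ ω, f i ω = P *ᵥ e i ω - ∑ l ∈ univ.erase i, Q l *ᵥ e l ω := by
      intro ω
      rw [hf, hr, Matrix.mulVec_sub, mulVec_sumv]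
      congr 1
      · rw [Matrix.mulVec_mulVec]
        congr 1
        rw [hP, Matrix.mul_assoc ((D i)ᵀ * (V i)⁻¹),
          Matrix.nonsing_inv_mul _ (hIHdet i), Matrix.mul_one]
      · exact Finset.sum_congr rfl fun l _ => by rw [Matrix.mulVec_mulVec]
    -- entrywise integral computation
    have key : ∀ s t, ∫ ω, f i ω s * f i ω t ∂μ
        = (P * V i * Pᵀ) s t + (∑ l ∈ univ.erase i, Q l * V l * (Q l)ᵀ) s t := by
      intro s t
      have hexp : ∀ ω, f i ω s * f i ω t
          = (P *ᵥ e i ω) s * (P *ᵥ e i ω) t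
            - (∑ l ∈ univ.erase i, (P *ᵥ e i ω) s * (Q l *ᵥ e l ω) t)
            - (∑ l ∈ univ.erase i, (Q l *ᵥ e l ω) s * (P *ᵥ e i ω) t)
            + ∑ l ∈ univ.erase i, ∑ m ∈ univ.erase i,
                (Q l *ᵥ e l ω) s * (Q m *ᵥ e m ω) t := by
        intro ω
        rw [hf']
        simp only [Pi.sub_apply, Finset.sum_apply]
        rw [sub_mul, mul_sub, mul_sub, Finset.sum_mul_sum, Finset.sum_mul, Finset.mul_sum]
        ring
      have I1 : Integrable (fun ω => (P *ᵥ e i ω) s * (P *ᵥ e i ω) t) μ :=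
        integrable_mulVec_mul P P (e i) (e i) (hInt i i) s t
      have I2 : Integrable (fun ω =>
          ∑ l ∈ univ.erase i, (P *ᵥ e i ω) s * (Q l *ᵥ e l ω) t) μ :=
        integrable_finset_sum _ fun l _ =>
          integrable_mulVec_mul P (Q l) (e i) (e l) (hInt i l) s t
      have I3 : Integrable (fun ω =>
          ∑ l ∈ univ.erase i, (Q l *ᵥ e l ω) s * (P *ᵥ e i ω) t) μ :=
        integrable_finset_sum _ fun l _ =>
          integrable_mulVec_mul (Q l) P (e l) (e i) (hInt l i) s t
      have I4 : Integrable (fun ω => ∑ l ∈ univ.erase i, ∑ m ∈ univ.erase i,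
          (Q l *ᵥ e l ω) s * (Q m *ᵥ e m ω) t) μ :=
        integrable_finset_sum _ fun l _ => integrable_finset_sum _ fun m _ =>
          integrable_mulVec_mul (Q l) (Q m) (e l) (e m) (hInt l m) s t
      have e1 : ∫ ω, (P *ᵥ e i ω) s * (P *ᵥ e i ω) t ∂μ = (P * V i * Pᵀ) s t := by
        rw [integral_mulVec_mul P P (e i) (e i) (hInt i i) s t]
        simp_rw [hcov i]
        exact sum_sum_mul_entry P P (V i) s t
      have e2 : ∫ ω, (∑ l ∈ univ.erase i, (P *ᵥ e i ω) s * (Q l *ᵥ e l ω) t) ∂μ = 0 := by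
        rw [integral_finset_sum _ fun l _ =>
          integrable_mulVec_mul P (Q l) (e i) (e l) (hInt i l) s t]
        refine Finset.sum_eq_zero fun l hl => ?_
        rw [integral_mulVec_mul P (Q l) (e i) (e l) (hInt i l) s t]
        refine Finset.sum_eq_zero fun j _ => Finset.sum_eq_zero fun k _ => ?_
        rw [hZero i l (Finset.ne_of_mem_erase hl).symm j k, mul_zero]
      have e3 : ∫ ω, (∑ l ∈ univ.erase i, (Q l *ᵥ e l ω) s * (P *ᵥ e i ω) t) ∂μ = 0 := by
        rw [integral_finset_sum _ fun l _ =>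
          integrable_mulVec_mul (Q l) P (e l) (e i) (hInt l i) s t]
        refine Finset.sum_eq_zero fun l hl => ?_
        rw [integral_mulVec_mul (Q l) P (e l) (e i) (hInt l i) s t]
        refine Finset.sum_eq_zero fun j _ => Finset.sum_eq_zero fun k _ => ?_
        rw [hZero l i (Finset.ne_of_mem_erase hl) j k, mul_zero]
      have e4 : ∫ ω, (∑ l ∈ univ.erase i, ∑ m ∈ univ.erase i,
          (Q l *ᵥ e l ω) s * (Q m *ᵥ e m ω) t) ∂μ
          = ∑ l ∈ univ.erase i, (Q l * V l * (Q l)ᵀ) s t := by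
        rw [integral_finset_sum _ fun l _ => integrable_finset_sum _ fun m _ =>
          integrable_mulVec_mul (Q l) (Q m) (e l) (e m) (hInt l m) s t]
        refine Finset.sum_congr rfl fun l hl => ?_
        rw [integral_finset_sum _ fun m _ =>
          integrable_mulVec_mul (Q l) (Q m) (e l) (e m) (hInt l m) s t]
        rw [Finset.sum_eq_single_of_mem l hl]
        · rw [integral_mulVec_mul (Q l) (Q l) (e l) (e l) (hInt l l) s t]
          simp_rw [hcov l]
          exact sum_sum_mul_entry (Q l) (Q l) (V l) s t
        · intro m _ hml
          rw [integral_mulVec_mul (Q l) (Q m) (e l) (e m) (hInt l m) s t]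
          refine Finset.sum_eq_zero fun j _ => Finset.sum_eq_zero fun k _ => ?_
          rw [hZero l m (Ne.symm hml) j k, mul_zero]
      calc ∫ ω, f i ω s * f i ω t ∂μ
          = ∫ ω, ((P *ᵥ e i ω) s * (P *ᵥ e i ω) t
            - (∑ l ∈ univ.erase i, (P *ᵥ e i ω) s * (Q l *ᵥ e l ω) t)
            - (∑ l ∈ univ.erase i, (Q l *ᵥ e l ω) s * (P *ᵥ e i ω) t)
            + ∑ l ∈ univ.erase i, ∑ m ∈ univ.erase i,
                (Q l *ᵥ e l ω) s * (Q m *ᵥ e m ω) t) ∂μ := by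
            exact integral_congr_ae (Filter.Eventually.of_forall hexp)
        _ = (P * V i * Pᵀ) s t + (∑ l ∈ univ.erase i, Q l * V l * (Q l)ᵀ) s t := by
            have I12 : Integrable (fun ω => (P *ᵥ e i ω) s * (P *ᵥ e i ω) t
                - ∑ l ∈ univ.erase i, (P *ᵥ e i ω) s * (Q l *ᵥ e l ω) t) μ := I1.sub I2
            have I123 : Integrable (fun ω => ((P *ᵥ e i ω) s * (P *ᵥ e i ω) t
                - ∑ l ∈ univ.erase i, (P *ᵥ e i ω) s * (Q l *ᵥ e l ω) t)
                - ∑ l ∈ univ.erase i, (Q l *ᵥ e l ω) s * (P *ᵥ e i ω) t) μ := I12.sub I3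
            rw [integral_add I123 I4, integral_sub I12 I3, integral_sub I1 I2,
              e1, e2, e3, e4, Matrix.sum_apply]
            ring
    have hmat : (Matrix.of fun s t => ∫ ω, f i ω s * f i ω t ∂μ)
        = P * V i * Pᵀ + ∑ l ∈ univ.erase i, Q l * V l * (Q l)ᵀ := by
      ext s t
      rw [Matrix.of_apply, key s t, Matrix.add_apply]
    rw [hmat]
    -- pure matrix algebra from here on
    have hVcancel : ∀ (l : Fin N) {k : ℕ} (x : Matrix (Fin (n l)) (Fin k) ℝ),
        (V l)⁻¹ * (V l * x) = x := by
      intro l k x; rw [← Matrix.mul_assoc, hWV, Matrix.one_mul]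
    have hPVP : P * V i * Pᵀ = A i := by
      rw [hP, hA, Matrix.transpose_mul, Matrix.transpose_transpose, hWsymm]
      simp only [Matrix.mul_assoc]
      rw [hVcancel]
    have key1 : (1 - H i i)⁻¹ * D i = D i * ((I₀ - A i)⁻¹ * I₀) := by
      have hHD : H i i * D i = D i * (Δ * A i) := by
        rw [hH, hA]; simp only [Matrix.mul_assoc]
      have hstep : (1 : Matrix (Fin p) (Fin p) ℝ) - Δ * A i = Δ * (I₀ - A i) := by
        rw [Matrix.mul_sub, hΔI]
      have h1 : (1 - H i i) * (D i * ((I₀ - A i)⁻¹ * I₀)) = D i := by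
        calc (1 - H i i) * (D i * ((I₀ - A i)⁻¹ * I₀))
            = D i * ((I₀ - A i)⁻¹ * I₀) - H i i * (D i * ((I₀ - A i)⁻¹ * I₀)) := by
              rw [Matrix.sub_mul, Matrix.one_mul]
          _ = D i * ((I₀ - A i)⁻¹ * I₀) - D i * (Δ * A i * ((I₀ - A i)⁻¹ * I₀)) := by
              rw [← Matrix.mul_assoc (H i i) (D i) ((I₀ - A i)⁻¹ * I₀), hHD,
                Matrix.mul_assoc (D i) (Δ * A i) ((I₀ - A i)⁻¹ * I₀)]
          _ = D i * (((1 : Matrix (Fin p) (Fin p) ℝ) - Δ * A i) * ((I₀ - A i)⁻¹ * I₀)) := by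
              rw [Matrix.sub_mul, Matrix.one_mul, Matrix.mul_sub]
          _ = D i * (Δ * ((I₀ - A i) * ((I₀ - A i)⁻¹ * I₀))) := by
              rw [hstep, Matrix.mul_assoc Δ (I₀ - A i) ((I₀ - A i)⁻¹ * I₀)]
          _ = D i := by
              rw [← Matrix.mul_assoc (I₀ - A i) (I₀ - A i)⁻¹ I₀,
                Matrix.mul_nonsing_inv _ (hIAdet i), Matrix.one_mul, hΔI, Matrix.mul_one]
      calc (1 - H i i)⁻¹ * D i
          = (1 - H i i)⁻¹ * ((1 - H i i) * (D i * ((I₀ - A i)⁻¹ * I₀))) := by rw [h1]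
        _ = D i * ((I₀ - A i)⁻¹ * I₀) := by
            rw [← Matrix.mul_assoc, Matrix.nonsing_inv_mul _ (hIHdet i), Matrix.one_mul]
    have hMD : M * D i = A i * ((I₀ - A i)⁻¹ * I₀) := by
      rw [hM, Matrix.mul_assoc, key1, ← Matrix.mul_assoc, ← hA i]
    have hMDT : (D i)ᵀ * Mᵀ = I₀ * (I₀ - A i)⁻¹ * A i := by
      have h0 : (D i)ᵀ * Mᵀ = (M * D i)ᵀ := (Matrix.transpose_mul M (D i)).symm
      rw [h0, hMD, Matrix.transpose_mul, Matrix.transpose_mul, hI₀symm, hIAsymm, hAsymm]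
    have hterm : ∀ l, Q l * V l * (Q l)ᵀ
        = M * D i * Δ * A l * Δ * ((D i)ᵀ * Mᵀ) := by
      intro l
      rw [hQ]
      simp only [hH, hA, Matrix.transpose_mul, Matrix.transpose_transpose, hWsymm, hΔsymm,
        Matrix.mul_assoc, hVcancel]
    have hsumA : ∑ l ∈ univ.erase i, A l = I₀ - A i := by
      have h := Finset.add_sum_erase univ A (Finset.mem_univ i)
      rw [hI₀, ← h]; abel
    have hsumQ : ∑ l ∈ univ.erase i, Q l * V l * (Q l)ᵀ = A i * (I₀ - A i)⁻¹ * A i := by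
      calc ∑ l ∈ univ.erase i, Q l * V l * (Q l)ᵀ
          = ∑ l ∈ univ.erase i, M * D i * Δ * A l * Δ * ((D i)ᵀ * Mᵀ) := by
            exact Finset.sum_congr rfl fun l _ => hterm l
        _ = M * D i * Δ * (∑ l ∈ univ.erase i, A l) * Δ * ((D i)ᵀ * Mᵀ) := by
            simp only [Finset.mul_sum, Finset.sum_mul]
        _ = M * D i * Δ * (I₀ - A i) * Δ * ((D i)ᵀ * Mᵀ) := by rw [hsumA]
        _ = A i * (I₀ - A i)⁻¹ * A i := by
            rw [hMD, hMDT]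
            have c1 : ∀ (x : Matrix (Fin p) (Fin p) ℝ), I₀ * (Δ * x) = x := by
              intro x; rw [← Matrix.mul_assoc, hIΔ, one_mul]
            have c2 : ∀ (x : Matrix (Fin p) (Fin p) ℝ), Δ * (I₀ * x) = x := by
              intro x; rw [← Matrix.mul_assoc, hΔI, one_mul]
            have c3 : ∀ (x : Matrix (Fin p) (Fin p) ℝ),
                (I₀ - A i) * ((I₀ - A i)⁻¹ * x) = x := by
              intro x; rw [← Matrix.mul_assoc, Matrix.mul_nonsing_inv _ (hIAdet i), one_mul]
            simp only [Matrix.mul_assoc]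
            rw [c1, c2, c3]
    rw [hPVP, hsumQ]
  refine ⟨main, ?_⟩
  calc ∑ i, (Matrix.of fun s t => ∫ ω, f i ω s * f i ω t ∂μ)
      = ∑ i, (A i + A i * (I₀ - A i)⁻¹ * A i) := Finset.sum_congr rfl fun i _ => main i
    _ = I₀ + ∑ i, A i * (I₀ - A i)⁻¹ * A i := by rw [Finset.sum_add_distrib, ← hI₀]
end

section
/- For clusters i = 1,…,N, let D_i be a real n_i × p matrix and V_i a real symmetric invertible n_i × n_i matrix; set A_i = D_iᵀ V_i⁻¹ D_i, I₀ = Σ_i A_i (assumed invertible), Δ = I₀⁻¹, H_{il} = D_i Δ D_lᵀ V_l⁻¹, and H_{ii} = D_i Δ D_iᵀ V_i⁻¹. Let e_1,…,e_N be independent random vectors on a probability space, e_i taking values in ℝ^{n_i}, with E[e_i] = 0, square-integrable components, and E[e_i e_iᵀ] = V_i. Define r_i = (I − H_{ii}) e_i − Σ_{l ≠ i} H_{il} e_l and the uncorrected score contribution d_i = D_iᵀ V_i⁻¹ r_i. Then E[d_i d_iᵀ] = A_i − A_i Δ A_i for every i, and consequently Σ_{i=1}^N E[d_i d_iᵀ]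 = I₀ − Σ_{i=1}^N A_i Δ A_i. -/
open scoped Matrix
open Finset MeasureTheory ProbabilityTheory

lemma aux_integrable_mul {Ω : Type*} [MeasurableSpace Ω] {μ : Measure Ω}
    {f g : Ω → ℝ} (hf : MemLp f 2 μ) (hg : MemLp g 2 μ) :
    Integrable (fun ω => f ω * g ω) μ := by
  have h := (((hf.add hg).integrable_sq).sub hf.integrable_sq).sub hg.integrable_sq
  refine (h.const_mul (1/2 : ℝ)).congr (Filter.Eventually.of_forall fun ω => ?_)
  simp only [Pi.sub_apply, Pi.add_apply]
  ring

section Aux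

variable {N p : ℕ} {n : Fin N → ℕ}
    {Ω : Type*} [MeasurableSpace Ω] {μ : Measure Ω} [IsProbabilityMeasure μ]
    {e : ∀ i, Ω → Fin (n i) → ℝ}

omit [IsProbabilityMeasure μ] in
lemma aux_memlp_mulVec (hL2 : ∀ i j, MemLp (fun ω => e i ω j) 2 μ)
    (a : Fin N) (P : Matrix (Fin p) (Fin (n a)) ℝ) (s : Fin p) :
    MemLp (fun ω => (P *ᵥ e a ω) s) 2 μ := by
  have h : (fun ω => (P *ᵥ e a ω) s) = ∑ j, (fun ω => P s j * e a ω j) := by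
    funext ω; simp [Matrix.mulVec, dotProduct]
  rw [h]
  exact memLp_finset_sum' _ (fun j _ => (hL2 a j).const_mul (P s j))

omit [IsProbabilityMeasure μ] in
lemma aux_expand (hL2 : ∀ i j, MemLp (fun ω => e i ω j) 2 μ)
    (a b : Fin N) (P : Matrix (Fin p) (Fin (n a)) ℝ) (Q : Matrix (Fin p) (Fin (n b)) ℝ)
    (s t : Fin p) :
    ∫ ω, (P *ᵥ e a ω) s * (Q *ᵥ e b ω) t ∂μ
      = ∑ j, ∑ k, P s j * Q t k * ∫ ω, e a ω j * e b ω k ∂μ := by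
  have hfun : ∀ ω, (P *ᵥ e a ω) s * (Q *ᵥ e b ω) t
      = ∑ j, ∑ k, P s j * Q t k * (e a ω j * e b ω k) := by
    intro ω
    simp only [Matrix.mulVec, dotProduct, Finset.sum_mul_sum]
    exact Finset.sum_congr rfl fun j _ => Finset.sum_congr rfl fun k _ => by ring
  simp_rw [hfun]
  rw [integral_finset_sum _ (fun j _ => integrable_finset_sum _ (fun k _ =>
    (aux_integrable_mul (hL2 a j) (hL2 b k)).const_mul _))]
  refine Finset.sum_congr rfl fun j _ => ?_
  rw [integral_finset_sum _ (fun k _ => (aux_integrable_mul (hL2 a j) (hL2 b k)).const_mul _)]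
  exact Finset.sum_congr rfl fun k _ => integral_const_mul _ _

lemma aux_zero (hL2 : ∀ i j, MemLp (fun ω => e i ω j) 2 μ)
    (hindep : iIndepFun e μ)
    (hmean : ∀ i j, ∫ ω, e i ω j ∂μ = 0)
    (a b : Fin N) (hab : a ≠ b)
    (P : Matrix (Fin p) (Fin (n a)) ℝ) (Q : Matrix (Fin p) (Fin (n b)) ℝ)
    (s t : Fin p) :
    ∫ ω, (P *ᵥ e a ω) s * (Q *ᵥ e b ω) t ∂μ = 0 := by
  rw [aux_expand hL2 a b P Q s t]
  refine Finset.sum_eq_zero fun j _ => Finset.sum_eq_zero fun k _ => ?_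
  have h := (hindep.indepFun hab).comp (measurable_pi_apply j) (measurable_pi_apply k)
  have h2 := h.integral_mul_eq_mul_integral ((hL2 a j).integrable one_le_two).aestronglyMeasurable
    ((hL2 b k).integrable one_le_two).aestronglyMeasurable
  have e1 : (fun ω => e a ω j * e b ω k) = ((fun f => f j) ∘ e a) * ((fun f => f k) ∘ e b) := rfl
  have e2 : (fun ω => e a ω j) = ((fun f => f j) ∘ e a) := rfl
  have e3 : (fun ω => e b ω k) = ((fun f => f k) ∘ e b) := rfl
  rw [e1, h2, ← e2, ← e3, hmean, hmean, mul_zero, mul_zero]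

omit [IsProbabilityMeasure μ] in
lemma aux_same {V : ∀ l, Matrix (Fin (n l)) (Fin (n l)) ℝ}
    (hL2 : ∀ i j, MemLp (fun ω => e i ω j) 2 μ)
    (hcov : ∀ i, ∀ j k, ∫ ω, e i ω j * e i ω k ∂μ = V i j k)
    (a : Fin N) (P Q : Matrix (Fin p) (Fin (n a)) ℝ) (s t : Fin p) :
    ∫ ω, (P *ᵥ e a ω) s * (Q *ᵥ e a ω) t ∂μ = (P * V a * Qᵀ) s t := by
  rw [aux_expand hL2 a a P Q s t]
  simp_rw [hcov]
  rw [Matrix.mul_apply]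
  simp_rw [Matrix.mul_apply, Matrix.transpose_apply, Finset.sum_mul]
  rw [Finset.sum_comm]
  exact Finset.sum_congr rfl fun j _ => Finset.sum_congr rfl fun k _ => by ring

end Aux

/-- exact finite-sample form of Proposition 3(i): under correctly
specified working covariance `E[e_i e_iᵀ] = V_i` and the first-order residual
expansion, the uncorrected score contributions `d_i = D_iᵀ V_i⁻¹ r_i` satisfy
`E[d_i d_iᵀ] = A_i − A_i Δ A_i` for every `i`, and hence
`Σ_i E[d_i d_iᵀ] = I₀ − Σ_i A_i Δ A_i`. -/
theorem liang_zeger_middle_matrix_downward_bias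
    {N p : ℕ} (n : Fin N → ℕ)
    (D : ∀ l, Matrix (Fin (n l)) (Fin p) ℝ)
    (V : ∀ l, Matrix (Fin (n l)) (Fin (n l)) ℝ)
    (hVsymm : ∀ l, (V l).IsSymm) (hVunit : ∀ l, IsUnit (V l))
    (A : Fin N → Matrix (Fin p) (Fin p) ℝ)
    (hA : ∀ l, A l = (D l)ᵀ * (V l)⁻¹ * D l)
    (I₀ : Matrix (Fin p) (Fin p) ℝ) (hI₀ : I₀ = ∑ l, A l)
    (hI₀unit : IsUnit I₀)
    (Δ : Matrix (Fin p) (Fin p) ℝ) (hΔ : Δ = I₀⁻¹)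
    (H : ∀ i l, Matrix (Fin (n i)) (Fin (n l)) ℝ)
    (hH : ∀ i l, H i l = D i * Δ * (D l)ᵀ * (V l)⁻¹)
    {Ω : Type*} [MeasurableSpace Ω] (μ : Measure Ω) [IsProbabilityMeasure μ]
    (e : ∀ i, Ω → Fin (n i) → ℝ)
    (hmeas : ∀ i, Measurable (e i))
    (hindep : iIndepFun e μ)
    (hL2 : ∀ i j, MemLp (fun ω => e i ω j) 2 μ)
    (hmean : ∀ i j, ∫ ω, e i ω j ∂μ = 0)
    (hcov : ∀ i, ∀ j k, ∫ ω, e i ω j * e i ω k ∂μ = V i j k)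
    (r : ∀ i, Ω → Fin (n i) → ℝ)
    (hr : ∀ i ω, r i ω =
      (1 - H i i) *ᵥ e i ω - ∑ l ∈ univ.erase i, H i l *ᵥ e l ω)
    (d : ∀ i, Ω → Fin p → ℝ)
    (hd : ∀ i ω, d i ω = ((D i)ᵀ * (V i)⁻¹) *ᵥ r i ω) :
    (∀ i, (Matrix.of fun s t => ∫ ω, d i ω s * d i ω t ∂μ)
        = A i - A i * Δ * A i) ∧
      ∑ i, (Matrix.of fun s t => ∫ ω, d i ω s * d i ω t ∂μ)
        = I₀ - ∑ i, A i * Δ * A i := by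
  -- basic matrix facts
  have hVdet : ∀ l, IsUnit (V l).det := fun l => ((Matrix.isUnit_iff_isUnit_det _).mp (hVunit l))
  have hVmul : ∀ l, (V l)⁻¹ * V l = 1 := fun l => Matrix.nonsing_inv_mul _ (hVdet l)
  have hVT : ∀ l, ((V l)⁻¹)ᵀ = (V l)⁻¹ := fun l => by
    rw [Matrix.transpose_nonsing_inv, (hVsymm l).eq]
  have hcanc : ∀ l (X : Matrix (Fin (n l)) (Fin p) ℝ), (V l)⁻¹ * (V l * X) = X := fun l X => by
    rw [← Matrix.mul_assoc, hVmul, Matrix.one_mul]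
  have hAsymm : ∀ l, (A l)ᵀ = A l := fun l => by
    simp [hA, Matrix.transpose_mul, Matrix.mul_assoc, hVT]
  have hI₀symm : I₀ᵀ = I₀ := by
    rw [hI₀, Matrix.transpose_sum]
    exact Finset.sum_congr rfl fun l _ => hAsymm l
  have hΔsymm : Δᵀ = Δ := by rw [hΔ, Matrix.transpose_nonsing_inv, hI₀symm]
  have hΔI₀ : Δ * I₀ = 1 := by
    rw [hΔ]; exact Matrix.nonsing_inv_mul _ ((Matrix.isUnit_iff_isUnit_det _).mp hI₀unit)
  have key : ∀ i, (Matrix.of fun s t => ∫ ω, d i ω s * d i ω t ∂μ)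
      = A i - A i * Δ * A i := by
    intro i
    set B : Matrix (Fin p) (Fin (n i)) ℝ := (D i)ᵀ * (V i)⁻¹ with hB
    set K : ∀ l, Matrix (Fin p) (Fin (n l)) ℝ := fun l => B * H i l with hKdef
    -- rewrite d
    have hd' : ∀ ω, d i ω = B *ᵥ e i ω - ∑ l, K l *ᵥ e l ω := by
      intro ω
      have hsum : B *ᵥ (∑ l ∈ univ.erase i, H i l *ᵥ e l ω)
          = ∑ l ∈ univ.erase i, K l *ᵥ e l ω := by
        rw [← Matrix.mulVecLin_apply, map_sum]
        exact Finset.sum_congr rfl fun l _ => by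
          rw [Matrix.mulVecLin_apply, Matrix.mulVec_mulVec]
      rw [hd, hr, Matrix.mulVec_sub, hsum, Matrix.mulVec_mulVec, Matrix.mul_sub,
        Matrix.mul_one, Matrix.sub_mulVec,
        ← Finset.add_sum_erase (univ : Finset (Fin N)) (fun l => K l *ᵥ e l ω) (mem_univ i)]
      show B *ᵥ e i ω - (B * H i i) *ᵥ e i ω - _ = _
      rw [sub_sub]
    have hds : ∀ ω s, d i ω s = (B *ᵥ e i ω) s - ∑ l, (K l *ᵥ e l ω) s := by
      intro ω s
      rw [hd']
      simp [Finset.sum_apply]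
    -- expand the product
    have hrepr : ∀ s t ω, d i ω s * d i ω t =
        (B *ᵥ e i ω) s * (B *ᵥ e i ω) t
        - ∑ l, (B *ᵥ e i ω) s * (K l *ᵥ e l ω) t
        - ∑ l, (K l *ᵥ e l ω) s * (B *ᵥ e i ω) t
        + ∑ l, ∑ m, (K l *ᵥ e l ω) s * (K m *ᵥ e m ω) t := by
      intro s t ω
      rw [hds, hds, sub_mul, mul_sub, mul_sub, Finset.sum_mul_sum, Finset.sum_mul,
        Finset.mul_sum]
      abel
    have hintP : ∀ (a b : Fin N) (P : Matrix (Fin p) (Fin (n a)) ℝ)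
        (Q : Matrix (Fin p) (Fin (n b)) ℝ) (s t : Fin p),
        Integrable (fun ω => (P *ᵥ e a ω) s * (Q *ᵥ e b ω) t) μ := fun a b P Q s t =>
      aux_integrable_mul (aux_memlp_mulVec hL2 a P s) (aux_memlp_mulVec hL2 b Q t)
    -- compute each integral
    have hI1 : ∀ s t, ∫ ω, (B *ᵥ e i ω) s * (B *ᵥ e i ω) t ∂μ = (B * V i * Bᵀ) s t :=
      fun s t => aux_same hL2 hcov i B B s t
    have hI2 : ∀ s t, ∫ ω, (∑ l, (B *ᵥ e i ω) s * (K l *ᵥ e l ω) t) ∂μ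
        = (B * V i * (K i)ᵀ) s t := by
      intro s t
      rw [integral_finset_sum _ (fun l _ => hintP i l B (K l) s t)]
      rw [Finset.sum_eq_single i
        (fun l _ hl => aux_zero hL2 hindep hmean i l (Ne.symm hl) B (K l) s t)
        (fun h => absurd (mem_univ i) h)]
      exact aux_same hL2 hcov i B (K i) s t
    have hI3 : ∀ s t, ∫ ω, (∑ l, (K l *ᵥ e l ω) s * (B *ᵥ e i ω) t) ∂μ
        = (K i * V i * Bᵀ) s t := by
      intro s t
      rw [integral_finset_sum _ (fun l _ => hintP l i (K l) B s t)]
      rw [Finset.sum_eq_single i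
        (fun l _ hl => aux_zero hL2 hindep hmean l i hl (K l) B s t)
        (fun h => absurd (mem_univ i) h)]
      exact aux_same hL2 hcov i (K i) B s t
    have hI4 : ∀ s t, ∫ ω, (∑ l, ∑ m, (K l *ᵥ e l ω) s * (K m *ᵥ e m ω) t) ∂μ
        = (∑ l, K l * V l * (K l)ᵀ) s t := by
      intro s t
      rw [integral_finset_sum _ (fun l _ => integrable_finset_sum _
        (fun m _ => hintP l m (K l) (K m) s t)), Matrix.sum_apply]
      refine Finset.sum_congr rfl fun l _ => ?_
      rw [integral_finset_sum _ (fun m _ => hintP l m (K l) (K m) s t)]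
      rw [Finset.sum_eq_single l
        (fun m _ hm => aux_zero hL2 hindep hmean l m (Ne.symm hm) (K l) (K m) s t)
        (fun h => absurd (mem_univ l) h)]
      exact aux_same hL2 hcov l (K l) (K l) s t
    -- combine
    have hmat : (Matrix.of fun s t => ∫ ω, d i ω s * d i ω t ∂μ)
        = B * V i * Bᵀ - B * V i * (K i)ᵀ - K i * V i * Bᵀ + ∑ l, K l * V l * (K l)ᵀ := by
      ext s t
      have hsplit : ∫ ω, d i ω s * d i ω t ∂μ =
          (∫ ω, (B *ᵥ e i ω) s * (B *ᵥ e i ω) t ∂μ)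
          - (∫ ω, (∑ l, (B *ᵥ e i ω) s * (K l *ᵥ e l ω) t) ∂μ)
          - (∫ ω, (∑ l, (K l *ᵥ e l ω) s * (B *ᵥ e i ω) t) ∂μ)
          + (∫ ω, (∑ l, ∑ m, (K l *ᵥ e l ω) s * (K m *ᵥ e m ω) t) ∂μ) := by
        simp_rw [hrepr s t]
        rw [integral_add, integral_sub, integral_sub]
        · exact hintP i i B B s t
        · exact integrable_finset_sum _ (fun l _ => hintP i l B (K l) s t)
        · exact ((hintP i i B B s t).sub
            (integrable_finset_sum _ (fun l _ => hintP i l B (K l) s t)))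
        · exact integrable_finset_sum _ (fun l _ => hintP l i (K l) B s t)
        · exact (((hintP i i B B s t).sub
            (integrable_finset_sum _ (fun l _ => hintP i l B (K l) s t))).sub
            (integrable_finset_sum _ (fun l _ => hintP l i (K l) B s t)))
        · exact integrable_finset_sum _ (fun l _ => integrable_finset_sum _
            (fun m _ => hintP l m (K l) (K m) s t))
      rw [Matrix.of_apply, hsplit, hI1, hI2, hI3, hI4]
      simp [Matrix.sub_apply, Matrix.add_apply]
    rw [hmat]
    -- matrix algebra
    have hBlVB : ∀ l, (D l)ᵀ * (V l)⁻¹ * V l * ((D l)ᵀ * (V l)⁻¹)ᵀ = A l := by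
      intro l
      rw [Matrix.transpose_mul, Matrix.transpose_transpose, hVT,
        Matrix.mul_assoc ((D l)ᵀ) ((V l)⁻¹) (V l), hVmul, Matrix.mul_one,
        ← Matrix.mul_assoc, ← hA]
    have hBVB : B * V i * Bᵀ = A i := by rw [hB]; exact hBlVB i
    have hK : ∀ l, K l = A i * Δ * ((D l)ᵀ * (V l)⁻¹) := by
      intro l
      show B * H i l = _
      rw [hB, hH, hA]
      simp only [Matrix.mul_assoc]
    have hKT : ∀ l, (K l)ᵀ = ((D l)ᵀ * (V l)⁻¹)ᵀ * (Δ * A i) := by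
      intro l
      rw [hK l, Matrix.transpose_mul (A i * Δ) ((D l)ᵀ * (V l)⁻¹),
        Matrix.transpose_mul (A i) Δ, hΔsymm, hAsymm]
    have hKVK : ∀ l, K l * V l * (K l)ᵀ = A i * Δ * A l * Δ * A i := by
      intro l
      rw [hKT l, hK l,
        Matrix.mul_assoc (A i * Δ) ((D l)ᵀ * (V l)⁻¹) (V l),
        Matrix.mul_assoc (A i * Δ) ((D l)ᵀ * (V l)⁻¹ * V l)
          (((D l)ᵀ * (V l)⁻¹)ᵀ * (Δ * A i)),
        ← Matrix.mul_assoc ((D l)ᵀ * (V l)⁻¹ * V l) (((D l)ᵀ * (V l)⁻¹)ᵀ) (Δ * A i),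
        hBlVB l]
      simp only [Matrix.mul_assoc]
    have hT2 : B * V i * (K i)ᵀ = A i * Δ * A i := by
      rw [hKT i, ← hB, ← Matrix.mul_assoc (B * V i) Bᵀ (Δ * A i), hBVB,
        ← Matrix.mul_assoc (A i) Δ (A i)]
    have hT3 : K i * V i * Bᵀ = A i * Δ * A i := by
      rw [hK i, ← hB, Matrix.mul_assoc (A i * Δ) B (V i),
        Matrix.mul_assoc (A i * Δ) (B * V i) Bᵀ, hBVB]
    have hsum4 : ∑ l, K l * V l * (K l)ᵀ = A i * Δ * A i := by
      have h := Finset.sum_congr rfl (fun l (_ : l ∈ (univ : Finset (Fin N))) => hKVK l)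
      rw [h, ← Finset.sum_mul, ← Finset.sum_mul, ← Finset.mul_sum, ← hI₀,
        Matrix.mul_assoc (A i) Δ I₀, hΔI₀, Matrix.mul_one]
    rw [hBVB, hT2, hT3, hsum4]
    abel
  refine ⟨key, ?_⟩
  have h2 : ∑ i, (Matrix.of fun s t => ∫ ω, d i ω s * d i ω t ∂μ)
      = ∑ i, (A i - A i * Δ * A i) := Finset.sum_congr rfl fun i _ => key i
  rw [h2, Finset.sum_sub_distrib, ← hI₀]
end

section
/- Let a₀ > 0 and a₁ > 0 be real numbers and let N₀, N₁ ≥ 2 be natural numbers. In the space of real 2×2 matrices set A₀ = a₀·[[1,0],[0,0]], A₁ = a₁·[[1,1],[1,1]], and I₀ = N₀·A₀ + N₁·A₁. Then I₀ − A₀ and I₀ − A₁ are invertible, and the overcorrection matrix B_lev := N₀·A₀(I₀ − A₀)⁻¹A₀ + N₁·A₁(I₀ − A₁)⁻¹A₁ satisfies B_lev = (N₀/(N₀ − 1))·A₀ + (N₁/(N₁ − 1))·A₁. -/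
/-- key computation of Corollary 1: in the 2×2 intercept–treatment
design with `A₀ = a₀·[[1,0],[0,0]]`, `A₁ = a₁·[[1,1],[1,1]]`, and
`I₀ = N₀·A₀ + N₁·A₁` (`a₀, a₁ > 0`, `N₀, N₁ ≥ 2`), the matrices `I₀ − A₀` and
`I₀ − A₁` are invertible, and
`N₀·A₀(I₀ − A₀)⁻¹A₀ + N₁·A₁(I₀ − A₁)⁻¹A₁ = (N₀/(N₀−1))·A₀ + (N₁/(N₁−1))·A₁`. -/
theorem overcorrection_two_by_two
    (a₀ a₁ : ℝ) (ha₀ : 0 < a₀) (ha₁ : 0 < a₁)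
    (N₀ N₁ : ℕ) (hN₀ : 2 ≤ N₀) (hN₁ : 2 ≤ N₁)
    (A₀ A₁ I₀ : Matrix (Fin 2) (Fin 2) ℝ)
    (hA₀ : A₀ = a₀ • !![1, 0; 0, 0]) (hA₁ : A₁ = a₁ • !![1, 1; 1, 1])
    (hI₀ : I₀ = (N₀ : ℝ) • A₀ + (N₁ : ℝ) • A₁) :
    IsUnit (I₀ - A₀) ∧ IsUnit (I₀ - A₁) ∧
      (N₀ : ℝ) • (A₀ * (I₀ - A₀)⁻¹ * A₀) + (N₁ : ℝ) • (A₁ * (I₀ - A₁)⁻¹ * A₁)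
        = ((N₀ : ℝ) / ((N₀ : ℝ) - 1)) • A₀ + ((N₁ : ℝ) / ((N₁ : ℝ) - 1)) • A₁ := by
  have hn₀ : (1 : ℝ) < (N₀ : ℝ) := by exact_mod_cast Nat.lt_of_lt_of_le Nat.one_lt_two hN₀
  have hn₁ : (1 : ℝ) < (N₁ : ℝ) := by exact_mod_cast Nat.lt_of_lt_of_le Nat.one_lt_two hN₁
  set p : ℝ := ((N₀ : ℝ) - 1) * a₀ with hp
  set q : ℝ := (N₁ : ℝ) * a₁ with hq
  set s : ℝ := (N₀ : ℝ) * a₀ with hs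
  set r : ℝ := ((N₁ : ℝ) - 1) * a₁ with hr
  have hp0 : p ≠ 0 := ne_of_gt (mul_pos (by linarith) ha₀)
  have hq0 : q ≠ 0 := by positivity
  have hs0 : s ≠ 0 := by positivity
  have hr0 : r ≠ 0 := ne_of_gt (mul_pos (by linarith) ha₁)
  have hM₀ : I₀ - A₀ = !![p + q, q; q, q] := by
    subst hA₀ hA₁ hI₀
    ext i j
    fin_cases i <;> fin_cases j <;>
      simp [hp, hq, Matrix.smul_apply] <;> ring
  have hM₁ : I₀ - A₁ = !![s + r, r; r, r] := by
    subst hA₀ hA₁ hI₀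
    ext i j
    fin_cases i <;> fin_cases j <;>
      simp [hs, hr, Matrix.smul_apply] <;> ring
  have hB₀ : (I₀ - A₀) * !![1/p, -(1/p); -(1/p), (p+q)/(p*q)] = 1 := by
    rw [hM₀]
    ext i j
    fin_cases i <;> fin_cases j <;>
      · simp [Matrix.mul_apply, Fin.sum_univ_two]
        try field_simp
        try ring
  have hB₁ : (I₀ - A₁) * !![1/s, -(1/s); -(1/s), (s+r)/(s*r)] = 1 := by
    rw [hM₁]
    ext i j
    fin_cases i <;> fin_cases j <;>
      · simp [Matrix.mul_apply, Fin.sum_univ_two]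
        try field_simp
        try ring
  have hu₀ : IsUnit (I₀ - A₀) := (Matrix.isUnit_iff_isUnit_det _).mpr (Matrix.isUnit_det_of_right_inverse hB₀)
  have hu₁ : IsUnit (I₀ - A₁) := (Matrix.isUnit_iff_isUnit_det _).mpr (Matrix.isUnit_det_of_right_inverse hB₁)
  refine ⟨hu₀, hu₁, ?_⟩
  have hinv₀ : (I₀ - A₀)⁻¹ = !![1/p, -(1/p); -(1/p), (p+q)/(p*q)] :=
    Matrix.inv_eq_right_inv hB₀
  have hinv₁ : (I₀ - A₁)⁻¹ = !![1/s, -(1/s); -(1/s), (s+r)/(s*r)] :=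
    Matrix.inv_eq_right_inv hB₁
  have h1₀ : (N₀ : ℝ) - 1 ≠ 0 := by linarith
  have h1₁ : (N₁ : ℝ) - 1 ≠ 0 := by linarith
  have e₀ : A₀ * (I₀ - A₀)⁻¹ * A₀ = (a₀ / ((N₀ : ℝ) - 1)) • !![1, 0; 0, 0] := by
    rw [hinv₀, hA₀]
    ext i j
    fin_cases i <;> fin_cases j <;>
      · simp [Matrix.mul_apply, Fin.sum_univ_two, hp]
        try field_simp
        try ring
  have e₁ : A₁ * (I₀ - A₁)⁻¹ * A₁ = (a₁ / ((N₁ : ℝ) - 1)) • !![1, 1; 1, 1] := by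
    rw [hinv₁, hA₁]
    ext i j
    fin_cases i <;> fin_cases j <;>
      · simp [Matrix.mul_apply, Fin.sum_univ_two, hs, hr]
        field_simp
        ring
  rw [e₀, e₁, hA₀, hA₁, smul_smul, smul_smul, smul_smul, smul_smul]
  congr 2 <;> field_simp
end

section
/- Let a₀ > 0 and a₁ > 0 be real numbers and let N₀, N₁ ≥ 2 be natural numbers. In the space of real 2×2 matrices set A₀ = a₀·[[1,0],[0,0]], A₁ = a₁·[[1,1],[1,1]], I₀ = N₀·A₀ + N₁·A₁, and B_lev = N₀·A₀(I₀ − A₀)⁻¹A₀ + N₁·A₁(I₀ − A₁)⁻¹A₁. Then the spectrum (over ℝ) of the matrix I₀⁻¹(I₀ + B_lev) is the set {N₀/(N₀ − 1), N₁/(N₁ − 1)}, and its largest element equals N_min/(N_min − 1), where N_min = min(N₀, N₁). -/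
set_option maxHeartbeats 1000000


/-- Corollary 1, scalar overcorrection bound: with
`A₀ = a₀·[[1,0],[0,0]]`, `A₁ = a₁·[[1,1],[1,1]]`, `I₀ = N₀·A₀ + N₁·A₁`, and
`B_lev = N₀·A₀(I₀ − A₀)⁻¹A₀ + N₁·A₁(I₀ − A₁)⁻¹A₁`, the real spectrum of
`I₀⁻¹ (I₀ + B_lev)` is `{N₀/(N₀−1), N₁/(N₁−1)}` and its largest element is
`N_min/(N_min − 1)` for `N_min = min(N₀, N₁)`. -/
theorem scalar_overcorrection_bound
    (a₀ a₁ : ℝ) (ha₀ : 0 < a₀) (ha₁ : 0 < a₁)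
    (N₀ N₁ : ℕ) (hN₀ : 2 ≤ N₀) (hN₁ : 2 ≤ N₁)
    (A₀ A₁ I₀ Blev : Matrix (Fin 2) (Fin 2) ℝ)
    (hA₀ : A₀ = a₀ • !![1, 0; 0, 0]) (hA₁ : A₁ = a₁ • !![1, 1; 1, 1])
    (hI₀ : I₀ = (N₀ : ℝ) • A₀ + (N₁ : ℝ) • A₁)
    (hB : Blev = (N₀ : ℝ) • (A₀ * (I₀ - A₀)⁻¹ * A₀)
        + (N₁ : ℝ) • (A₁ * (I₀ - A₁)⁻¹ * A₁)) :
    spectrum ℝ (I₀⁻¹ * (I₀ + Blev))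
        = {(N₀ : ℝ) / ((N₀ : ℝ) - 1), (N₁ : ℝ) / ((N₁ : ℝ) - 1)} ∧
      IsGreatest (spectrum ℝ (I₀⁻¹ * (I₀ + Blev)))
        (((min N₀ N₁ : ℕ) : ℝ) / (((min N₀ N₁ : ℕ) : ℝ) - 1)) := by
  have h2 : (2:ℝ) ≤ (N₀:ℝ) := by exact_mod_cast hN₀
  have h2' : (2:ℝ) ≤ (N₁:ℝ) := by exact_mod_cast hN₁
  have hm0 : (0:ℝ) < (N₀:ℝ) - 1 := by linarith
  have hm1 : (0:ℝ) < (N₁:ℝ) - 1 := by linarith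
  have hn0 : (0:ℝ) < (N₀:ℝ) := by linarith
  have hn1 : (0:ℝ) < (N₁:ℝ) := by linarith
  have ne0 : a₀ ≠ 0 := ne_of_gt ha₀
  have ne1 : a₁ ≠ 0 := ne_of_gt ha₁
  have nem0 : (N₀:ℝ) - 1 ≠ 0 := ne_of_gt hm0
  have nem1 : (N₁:ℝ) - 1 ≠ 0 := ne_of_gt hm1
  have nen0 : (N₀:ℝ) ≠ 0 := ne_of_gt hn0
  have nen1 : (N₁:ℝ) ≠ 0 := ne_of_gt hn1
  set l0 : ℝ := (N₀ : ℝ) / ((N₀ : ℝ) - 1) with hl0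
  set l1 : ℝ := (N₁ : ℝ) / ((N₁ : ℝ) - 1) with hl1
  have hIA0 : (I₀ - A₀)⁻¹ = (((N₀:ℝ)-1)*a₀*((N₁:ℝ)*a₁))⁻¹ •
      !![(N₁:ℝ)*a₁, -((N₁:ℝ)*a₁); -((N₁:ℝ)*a₁), ((N₀:ℝ)-1)*a₀+(N₁:ℝ)*a₁] := by
    apply Matrix.inv_eq_right_inv
    ext i j
    fin_cases i <;> fin_cases j <;>
      simp [hI₀, hA₀, hA₁, Matrix.mul_apply, Fin.sum_univ_two, Matrix.one_apply] <;>
      (field_simp [ne0, ne1, nem0, nem1, nen0, nen1]; ring)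
  have hIA1 : (I₀ - A₁)⁻¹ = ((N₀:ℝ)*a₀*(((N₁:ℝ)-1)*a₁))⁻¹ •
      !![((N₁:ℝ)-1)*a₁, -(((N₁:ℝ)-1)*a₁); -(((N₁:ℝ)-1)*a₁), (N₀:ℝ)*a₀+((N₁:ℝ)-1)*a₁] := by
    apply Matrix.inv_eq_right_inv
    ext i j
    fin_cases i <;> fin_cases j <;>
      simp [hI₀, hA₀, hA₁, Matrix.mul_apply, Fin.sum_univ_two, Matrix.one_apply] <;>
      (field_simp [ne0, ne1, nem0, nem1, nen0, nen1]; ring)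
  have hI0inv : I₀⁻¹ = ((N₀:ℝ)*a₀*((N₁:ℝ)*a₁))⁻¹ •
      !![(N₁:ℝ)*a₁, -((N₁:ℝ)*a₁); -((N₁:ℝ)*a₁), (N₀:ℝ)*a₀+(N₁:ℝ)*a₁] := by
    apply Matrix.inv_eq_right_inv
    ext i j
    fin_cases i <;> fin_cases j <;>
      simp [hI₀, hA₀, hA₁, Matrix.mul_apply, Fin.sum_univ_two, Matrix.one_apply] <;>
      (field_simp [ne0, ne1, nem0, nem1, nen0, nen1]; ring)
  have hBlev : Blev = !![(N₀:ℝ)*a₀/((N₀:ℝ)-1) + (N₁:ℝ)*a₁/((N₁:ℝ)-1), (N₁:ℝ)*a₁/((N₁:ℝ)-1);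
      (N₁:ℝ)*a₁/((N₁:ℝ)-1), (N₁:ℝ)*a₁/((N₁:ℝ)-1)] := by
    rw [hB, hIA0, hIA1, hA₀, hA₁]
    ext i j
    fin_cases i <;> fin_cases j <;>
      simp [Matrix.mul_apply, Fin.sum_univ_two] <;>
      (field_simp [ne0, ne1, nem0, nem1, nen0, nen1]; ring)
  have hM : I₀⁻¹ * (I₀ + Blev) = !![l0, 0; l1 - l0, l1] := by
    rw [hI0inv, hBlev, hI₀, hA₀, hA₁, hl0, hl1]
    ext i j
    fin_cases i <;> fin_cases j <;>
      simp [Matrix.mul_apply, Fin.sum_univ_two] <;>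
      (field_simp [ne0, ne1, nem0, nem1, nen0, nen1]; ring)
  have hspec : spectrum ℝ (I₀⁻¹ * (I₀ + Blev)) = {l0, l1} := by
    rw [hM]
    ext a
    rw [Set.mem_insert_iff, Set.mem_singleton_iff, spectrum.mem_iff,
      Matrix.isUnit_iff_isUnit_det, isUnit_iff_ne_zero, not_not,
      Algebra.algebraMap_eq_smul_one]
    have hdet : (a • (1 : Matrix (Fin 2) (Fin 2) ℝ) - !![l0, 0; l1 - l0, l1]).det
        = (a - l0) * (a - l1) := by
      simp [Matrix.det_fin_two, Matrix.one_apply]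
      try ring
    rw [hdet, mul_eq_zero, sub_eq_zero, sub_eq_zero]
  refine ⟨hspec, ?_⟩
  rw [hspec]
  rcases le_total N₀ N₁ with h | h
  · have hr : (N₁:ℝ) / ((N₁:ℝ) - 1) ≤ (N₀:ℝ) / ((N₀:ℝ) - 1) := by
      rw [div_le_div_iff₀ hm1 hm0]
      have : (N₀:ℝ) ≤ (N₁:ℝ) := by exact_mod_cast h
      nlinarith
    rw [min_eq_left h]
    exact ⟨Set.mem_insert _ _, by rintro x (rfl | rfl) <;> [exact le_rfl; exact hr]⟩
  · have hr : (N₀:ℝ) / ((N₀:ℝ) - 1) ≤ (N₁:ℝ) / ((N₁:ℝ) - 1) := by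
      rw [div_le_div_iff₀ hm0 hm1]
      have : (N₁:ℝ) ≤ (N₀:ℝ) := by exact_mod_cast h
      nlinarith
    rw [min_eq_right h]
    exact ⟨Set.mem_insert_of_mem _ rfl, by rintro x (rfl | rfl) <;> [exact hr; exact le_rfl]⟩
end

section
/- For clusters i = 1,…,N, let D_i be a real n_i × p matrix, Ṽ_i an invertible real n_i × n_i matrix, and r_i ∈ ℝ^{n_i} a fixed vector; let p ≥ 1, let φ > 0 be real, and set V_i(φ) = φ·Ṽ_i. Define I₀(φ), Δ(φ), d_i(φ), d̄(φ), I₁ᶜ(φ) as the sensitivity matrix, its inverse, the score contributions, their mean, and the mean-centered middle matrix built from V_i(φ), and Ĩ₀ (assumed invertible), Δ̃, Ĩ₁ᶜ the corresponding quantities built from Ṽ_i. With κ(φ) = max{1, (1/p)·trace(Δ(φ) I₁ᶜ(φ))} and C = trace(Δ̃ Ĩ₁ᶜ), one has κ(φ)·Δ(φ) = max{φ, C/p}·Δ̃. -/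
open scoped Matrix
open Finset

/-- Appendix Proposition S1, part (iv): with the Morel design-effect
factor `κ(φ) = max{1, (1/p)·trace(Δ(φ) I₁ᶜ(φ))}` and `C = trace(Δ̃ Ĩ₁ᶜ)`, one has
`κ(φ)·Δ(φ) = max{φ, C/p}·Δ̃`. -/
theorem morel_design_effect_scale
    {N p : ℕ} (hp : 1 ≤ p) (n : Fin N → ℕ) (φ : ℝ) (hφ : 0 < φ)
    (D : ∀ i, Matrix (Fin (n i)) (Fin p) ℝ)
    (Vt : ∀ i, Matrix (Fin (n i)) (Fin (n i)) ℝ)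
    (hVt : ∀ i, IsUnit (Vt i))
    (r : ∀ i, Fin (n i) → ℝ)
    (I₀φ It₀ : Matrix (Fin p) (Fin p) ℝ)
    (hI₀φ : I₀φ = ∑ i, (D i)ᵀ * (φ • Vt i)⁻¹ * D i)
    (hIt₀ : It₀ = ∑ i, (D i)ᵀ * (Vt i)⁻¹ * D i)
    (hIt₀unit : IsUnit It₀)
    (Δφ Δt : Matrix (Fin p) (Fin p) ℝ)
    (hΔφ : Δφ = I₀φ⁻¹) (hΔt : Δt = It₀⁻¹)
    (dφ dt : ∀ _ : Fin N, Fin p → ℝ)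
    (hdφ : ∀ i, dφ i = ((D i)ᵀ * (φ • Vt i)⁻¹) *ᵥ r i)
    (hdt : ∀ i, dt i = ((D i)ᵀ * (Vt i)⁻¹) *ᵥ r i)
    (dbarφ dbart : Fin p → ℝ)
    (hdbarφ : dbarφ = (N : ℝ)⁻¹ • ∑ i, dφ i)
    (hdbart : dbart = (N : ℝ)⁻¹ • ∑ i, dt i)
    (I₁cφ It₁c : Matrix (Fin p) (Fin p) ℝ)
    (hI₁cφ : I₁cφ = ∑ i, Matrix.vecMulVec (dφ i - dbarφ) (dφ i - dbarφ))
    (hIt₁c : It₁c = ∑ i, Matrix.vecMulVec (dt i - dbart) (dt i - dbart))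
    (κ C : ℝ)
    (hκ : κ = max 1 ((1 / (p : ℝ)) * (Δφ * I₁cφ).trace))
    (hC : C = (Δt * It₁c).trace) :
    κ • Δφ = max φ (C / (p : ℝ)) • Δt := by
  have hφ0 : φ ≠ 0 := hφ.ne'
  have hp0 : (p : ℝ) ≠ 0 := by positivity
  haveI : Invertible φ := invertibleOfNonzero hφ0
  have hinv : ∀ i, (φ • Vt i)⁻¹ = φ⁻¹ • (Vt i)⁻¹ := by
    intro i
    rw [Matrix.inv_smul (A := Vt i) φ ((Matrix.isUnit_iff_isUnit_det _).mp (hVt i)),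
      invOf_eq_inv φ]
  have hI : I₀φ = φ⁻¹ • It₀ := by
    rw [hI₀φ, hIt₀, Finset.smul_sum]
    refine Finset.sum_congr rfl fun i _ => ?_
    rw [hinv, Matrix.mul_smul, Matrix.smul_mul]
  have hΔ : Δφ = φ • Δt := by
    haveI : Invertible φ⁻¹ := invertibleOfNonzero (inv_ne_zero hφ0)
    rw [hΔφ, hΔt, hI,
      Matrix.inv_smul (A := It₀) φ⁻¹ ((Matrix.isUnit_iff_isUnit_det _).mp hIt₀unit),
      invOf_eq_inv φ⁻¹, inv_inv]
  have hd : ∀ i, dφ i = φ⁻¹ • dt i := by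
    intro i
    rw [hdφ, hdt, hinv, Matrix.mul_smul, Matrix.smul_mulVec]
  have hdbar : dbarφ = φ⁻¹ • dbart := by
    rw [hdbarφ, hdbart]
    simp only [hd, ← Finset.smul_sum]
    rw [smul_comm]
  have hsub : ∀ i, dφ i - dbarφ = φ⁻¹ • (dt i - dbart) := by
    intro i; rw [hd, hdbar, smul_sub]
  have hI1 : I₁cφ = (φ⁻¹ * φ⁻¹) • It₁c := by
    rw [hI₁cφ, hIt₁c, Finset.smul_sum]
    refine Finset.sum_congr rfl fun i _ => ?_
    rw [hsub]
    ext a b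
    simp [Matrix.vecMulVec_apply]
    ring
  have htr : (Δφ * I₁cφ).trace = φ⁻¹ * C := by
    rw [hΔ, hI1, Matrix.smul_mul, Matrix.mul_smul, smul_smul, Matrix.trace_smul, hC,
      smul_eq_mul]
    field_simp
  rw [hκ, htr, hΔ, smul_smul]
  congr 1
  rw [max_mul_of_nonneg _ _ hφ.le, one_mul]
  congr 1
  field_simp
end
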